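/- Let g(θ) = exp(−1/(1+cos θ)²)·sin²(tan(θ/2)) extended by 0 at θ ∈ π + 2πℤ, and let Ω = {(g(θ)cos θ, g(θ)sin θ) : θ ∈ [0,2π)}. Then Ω is a compact connected subset of ℝ² containing the origin, and Ω \ {0} has countably infinitely many connected components (the open petals). -/

import Mathlib

open Real

open Classical in
noncomputable def g (θ : ℝ) : ℝ :=
  if ∃ k : ℤ, θ = π + 2 * π * k then 0
  else Real.exp (-(1 / (1 + Real.cos θ) ^ 2)) * Real.sin (Real.tan (θ / 2)) ^ 2


noncomputable def Ω : Set (ℝ × ℝ) :=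
  {p : ℝ × ℝ | ∃ θ ∈ Set.Ico (0 : ℝ) (2 * π), p = (g θ * Real.cos θ, g θ * Real.sin θ)}

open Filter Topology

lemma exceptional_iff (θ : ℝ) : (∃ k : ℤ, θ = π + 2 * π * k) ↔ Real.cos θ = -1 := by
  rw [Real.cos_eq_neg_one_iff]
  constructor
  · rintro ⟨k, rfl⟩; exact ⟨k, by ring⟩
  · rintro ⟨k, rfl⟩; exact ⟨k, by ring⟩

lemma g_of_ne (θ : ℝ) (h : Real.cos θ ≠ -1) :
    g θ = Real.exp (-(1 / (1 + Real.cos θ) ^ 2)) * Real.sin (Real.tan (θ / 2)) ^ 2 := by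
  rw [g, if_neg]
  rw [exceptional_iff]; exact h

lemma g_of_eq (θ : ℝ) (h : Real.cos θ = -1) : g θ = 0 := by
  rw [g, if_pos]; rwa [exceptional_iff]

lemma g_nonneg (θ : ℝ) : 0 ≤ g θ := by
  rw [g]; split
  · exact le_refl 0
  · positivity

lemma one_add_cos_ne {θ : ℝ} (h : Real.cos θ ≠ -1) : 1 + Real.cos θ ≠ 0 := by
  intro h'; apply h; linarith

lemma g_le (θ : ℝ) (h : Real.cos θ ≠ -1) : g θ ≤ Real.exp (-(1 / (1 + Real.cos θ) ^ 2)) := by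
  rw [g_of_ne θ h]
  have := Real.sin_sq_le_one (Real.tan (θ / 2))
  nlinarith [Real.exp_pos (-(1 / (1 + Real.cos θ) ^ 2))]

lemma continuous_g : Continuous g := by
  rw [continuous_iff_continuousAt]
  intro θ₀
  by_cases h : Real.cos θ₀ = -1
  · -- bad point
    rw [ContinuousAt, g_of_eq θ₀ h]
    have hsplit : 𝓝 θ₀ = 𝓝[{θ | Real.cos θ = -1}] θ₀ ⊔ 𝓝[{θ | Real.cos θ ≠ -1}] θ₀ := by
      rw [← nhdsWithin_union]
      have : {θ | Real.cos θ = -1} ∪ {θ | Real.cos θ ≠ -1} = Set.univ := by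
        ext x; simp [em]
      rw [this, nhdsWithin_univ]
    rw [hsplit, tendsto_sup]
    constructor
    · apply Tendsto.congr' _ tendsto_const_nhds
      filter_upwards [eventually_mem_nhdsWithin] with x hx
      exact (g_of_eq x hx).symm
    · apply squeeze_zero' (g := fun θ => Real.exp (-(1 / (1 + Real.cos θ) ^ 2)))
      · filter_upwards with x using g_nonneg x
      · filter_upwards [eventually_mem_nhdsWithin] with x hx
        exact g_le x hx
      · -- bound tends to 0
        have h1 : Tendsto (fun θ => (1 + Real.cos θ) ^ 2) (𝓝[{θ | Real.cos θ ≠ -1}] θ₀) (𝓝[>] 0) := by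
          rw [tendsto_nhdsWithin_iff]
          constructor
          · have hc : Continuous (fun θ => (1 + Real.cos θ) ^ 2) := by continuity
            have := hc.continuousAt (x := θ₀)
            rw [ContinuousAt] at this
            simpa [h] using this.mono_left nhdsWithin_le_nhds
          · filter_upwards [eventually_mem_nhdsWithin] with x hx
            have : (1 + Real.cos x) ≠ 0 := one_add_cos_ne hx
            exact Set.mem_Ioi.2 (by positivity)
        have h2 : Tendsto (fun u : ℝ => Real.exp (-(1 / u))) (𝓝[>] (0:ℝ)) (𝓝 0) := by
          have := Real.tendsto_exp_atBot.comp
            (tendsto_neg_atTop_atBot.comp tendsto_inv_nhdsGT_zero)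
          simpa [Function.comp_def, one_div] using this
        exact h2.comp h1
  · -- good point
    have hopen : IsOpen {θ : ℝ | Real.cos θ = -1}ᶜ :=
      (isClosed_eq Real.continuous_cos continuous_const).isOpen_compl
    have hmem : {θ : ℝ | Real.cos θ = -1}ᶜ ∈ 𝓝 θ₀ := hopen.mem_nhds h
    have hcos2 : Real.cos (θ₀ / 2) ≠ 0 := by
      intro h0
      apply h
      have : Real.cos (2 * (θ₀ / 2)) = 2 * Real.cos (θ₀ / 2) ^ 2 - 1 := Real.cos_two_mul _
      rw [h0] at this
      norm_num at this
      rw [show (2 : ℝ) * (θ₀ / 2) = θ₀ by ring] at this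
      exact this
    have hform : ContinuousAt
        (fun θ => Real.exp (-(1 / (1 + Real.cos θ) ^ 2)) * Real.sin (Real.tan (θ / 2)) ^ 2) θ₀ := by
      apply ContinuousAt.mul
      · apply Real.continuous_exp.continuousAt.comp
        apply ContinuousAt.neg
        exact ContinuousAt.div continuousAt_const
          (((continuous_const.add Real.continuous_cos).pow 2).continuousAt)
          (pow_ne_zero 2 (one_add_cos_ne h))
      · apply ContinuousAt.pow
        have hdiv : ContinuousAt (fun θ : ℝ => θ / 2) θ₀ := by fun_prop
        have h2 : ContinuousAt (Real.tan ∘ (fun θ : ℝ => θ / 2)) θ₀ :=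
          ContinuousAt.comp (f := fun θ : ℝ => θ / 2) (x := θ₀) (Real.continuousAt_tan.2 hcos2) hdiv
        have h3 : ContinuousAt (Real.sin ∘ Real.tan ∘ (fun θ : ℝ => θ / 2)) θ₀ :=
          Real.continuous_sin.continuousAt.comp h2
        exact h3
    apply hform.congr
    filter_upwards [hmem] with x hx
    exact (g_of_ne x hx).symm

noncomputable def LL (k : ℤ) : ℝ :=
  if 0 ≤ k then 2 * arctan (k * π) else 2 * π + 2 * arctan (k * π)

noncomputable def UU (k : ℤ) : ℝ :=
  if 0 ≤ k then 2 * arctan ((k + 1) * π) else 2 * π + 2 * arctan ((k + 1) * π)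

noncomputable def J (k : ℤ) : Set ℝ := Set.Ioo (LL k) (UU k)

lemma arctan_mono : StrictMono arctan := Real.arctan_strictMono

lemma LL_lt_UU (k : ℤ) : LL k < UU k := by
  have h : arctan ((k : ℝ) * π) < arctan (((k : ℝ) + 1) * π) := by
    apply _root_.arctan_mono
    have := pi_pos
    nlinarith
  unfold LL UU
  split <;> linarith

lemma J_bounds {k : ℤ} {θ : ℝ} (h : θ ∈ J k) :
    (0 ≤ k ∧ 0 < θ ∧ θ < π) ∨ (k < 0 ∧ π < θ ∧ θ < 2 * π) := by
  obtain ⟨h1, h2⟩ := h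
  by_cases hk : 0 ≤ k
  · left
    refine ⟨hk, ?_, ?_⟩
    · have : (0:ℝ) ≤ arctan (k * π) := by
        rw [← Real.arctan_zero]
        apply arctan_mono.monotone
        have := pi_pos
        positivity
      rw [LL, if_pos hk] at h1
      linarith
    · have : arctan (((k:ℝ) + 1) * π) < π / 2 := Real.arctan_lt_pi_div_two _
      rw [UU, if_pos hk] at h2
      linarith
  · right
    push_neg at hk
    refine ⟨hk, ?_, ?_⟩
    · have : -(π/2) < arctan ((k:ℝ) * π) := Real.neg_pi_div_two_lt_arctan _
      rw [LL, if_neg (not_le.2 hk)] at h1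
      linarith
    · have : arctan (((k:ℝ) + 1) * π) ≤ 0 := by
        rw [← Real.arctan_zero]
        apply arctan_mono.monotone
        have hp := pi_pos
        have : (k:ℝ) + 1 ≤ 0 := by
          have : (k:ℝ) ≤ -1 := by exact_mod_cast Int.le_sub_one_of_lt hk
          linarith
        nlinarith
      rw [UU, if_neg (not_le.2 hk)] at h2
      linarith

lemma J_subset_Ioo {k : ℤ} {θ : ℝ} (h : θ ∈ J k) : θ ∈ Set.Ioo 0 (2 * π) := by
  have := pi_pos
  rcases J_bounds h with ⟨_, h1, h2⟩ | ⟨_, h1, h2⟩ <;> constructor <;> linarith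

lemma J_ne_pi {k : ℤ} {θ : ℝ} (h : θ ∈ J k) : θ ≠ π := by
  rcases J_bounds h with ⟨_, _, h2⟩ | ⟨_, h1, _⟩ <;> intro he <;> linarith

lemma cos_ne_neg_one_of_Ioo {θ : ℝ} (h0 : 0 < θ) (h2 : θ < 2 * π) (hpi : θ ≠ π) :
    Real.cos θ ≠ -1 := by
  intro hc
  obtain ⟨k, hk⟩ := (exceptional_iff θ).2 hc
  have hp := pi_pos
  have hk0 : k = 0 := by
    by_contra hne
    rcases lt_or_gt_of_ne hne with hlt | hgt
    · have : (k:ℝ) ≤ -1 := by exact_mod_cast Int.le_sub_one_of_lt hlt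
      nlinarith
    · have : (1:ℝ) ≤ (k:ℝ) := by exact_mod_cast hgt
      nlinarith
  rw [hk0] at hk
  simp at hk
  exact hpi hk

lemma tan_half_mem {k : ℤ} {θ : ℝ} (h : θ ∈ J k) :
    (k : ℝ) * π < Real.tan (θ / 2) ∧ Real.tan (θ / 2) < ((k : ℝ) + 1) * π := by
  obtain ⟨h1, h2⟩ := h
  have hmem1 : arctan ((k:ℝ) * π) ∈ Set.Ioo (-(π/2)) (π/2) :=
    ⟨Real.neg_pi_div_two_lt_arctan _, Real.arctan_lt_pi_div_two _⟩
  have hmem2 : arctan (((k:ℝ) + 1) * π) ∈ Set.Ioo (-(π/2)) (π/2) :=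
    ⟨Real.neg_pi_div_two_lt_arctan _, Real.arctan_lt_pi_div_two _⟩
  by_cases hk : 0 ≤ k
  · rw [LL, if_pos hk] at h1
    rw [UU, if_pos hk] at h2
    have hx : θ / 2 ∈ Set.Ioo (-(π/2)) (π/2) := by
      constructor
      · have := hmem1.1; linarith
      · have := hmem2.2; linarith
    have t1 : Real.tan (arctan ((k:ℝ) * π)) < Real.tan (θ / 2) :=
      Real.strictMonoOn_tan hmem1 hx (by linarith)
    have t2 : Real.tan (θ / 2) < Real.tan (arctan (((k:ℝ) + 1) * π)) :=
      Real.strictMonoOn_tan hx hmem2 (by linarith)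
    rw [Real.tan_arctan] at t1 t2
    exact ⟨t1, t2⟩
  · rw [LL, if_neg hk] at h1
    rw [UU, if_neg hk] at h2
    have hx : θ / 2 - π ∈ Set.Ioo (-(π/2)) (π/2) := by
      constructor
      · have := hmem1.1; linarith
      · have := hmem2.2; linarith
    have t1 : Real.tan (arctan ((k:ℝ) * π)) < Real.tan (θ / 2 - π) :=
      Real.strictMonoOn_tan hmem1 hx (by linarith)
    have t2 : Real.tan (θ / 2 - π) < Real.tan (arctan (((k:ℝ) + 1) * π)) :=
      Real.strictMonoOn_tan hx hmem2 (by linarith)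
    rw [Real.tan_arctan] at t1 t2
    rw [Real.tan_sub_pi] at t1 t2
    exact ⟨t1, t2⟩

lemma sin_ne_zero_of_mem_Ioo {k : ℤ} {t : ℝ} (h1 : (k:ℝ) * π < t) (h2 : t < ((k:ℝ) + 1) * π) :
    Real.sin t ≠ 0 := by
  intro hs
  obtain ⟨n, hn⟩ := Real.sin_eq_zero_iff.1 hs
  have hp := pi_pos
  rw [← hn] at h1 h2
  have hk1 : (k:ℝ) < n := by
    by_contra hle
    push_neg at hle
    nlinarith
  have hk2 : (n:ℝ) < (k:ℝ) + 1 := by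
    by_contra hle
    push_neg at hle
    nlinarith
  have h1' : k < n := by exact_mod_cast hk1
  have h2' : (n:ℝ) < ((k+1 : ℤ) : ℝ) := by push_cast; linarith
  have h2'' : n < k + 1 := by exact_mod_cast h2'
  omega

lemma g_pos_of_mem {k : ℤ} {θ : ℝ} (h : θ ∈ J k) : 0 < g θ := by
  have hb := J_subset_Ioo h
  have hc : Real.cos θ ≠ -1 := cos_ne_neg_one_of_Ioo hb.1 hb.2 (J_ne_pi h)
  rw [g_of_ne θ hc]
  obtain ⟨t1, t2⟩ := tan_half_mem h
  have hs := sin_ne_zero_of_mem_Ioo t1 t2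
  have := Real.exp_pos (-(1 / (1 + Real.cos θ) ^ 2))
  positivity

-- g vanishes whenever sin (tan (θ/2)) = 0
lemma g_eq_zero_of_sin (θ : ℝ) (h : Real.sin (Real.tan (θ / 2)) = 0) : g θ = 0 := by
  by_cases hc : Real.cos θ = -1
  · exact g_of_eq θ hc
  · rw [g_of_ne θ hc, h]; ring

lemma tan_LL (k : ℤ) : Real.tan (LL k / 2) = (k : ℝ) * π := by
  rw [LL]
  split
  · rw [show (2 * arctan ((k:ℝ) * π)) / 2 = arctan ((k:ℝ) * π) by ring, Real.tan_arctan]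
  · rw [show (2 * π + 2 * arctan ((k:ℝ) * π)) / 2 = arctan ((k:ℝ) * π) + π by ring,
      Real.tan_add_pi, Real.tan_arctan]

lemma tan_UU (k : ℤ) : Real.tan (UU k / 2) = ((k : ℝ) + 1) * π := by
  rw [UU]
  split
  · rw [show (2 * arctan (((k:ℝ) + 1) * π)) / 2 = arctan (((k:ℝ) + 1) * π) by ring,
      Real.tan_arctan]
  · rw [show (2 * π + 2 * arctan (((k:ℝ) + 1) * π)) / 2 = arctan (((k:ℝ) + 1) * π) + π by ring,
      Real.tan_add_pi, Real.tan_arctan]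

lemma g_LL (k : ℤ) : g (LL k) = 0 := by
  apply g_eq_zero_of_sin
  rw [tan_LL]
  exact Real.sin_int_mul_pi k

lemma g_UU (k : ℤ) : g (UU k) = 0 := by
  apply g_eq_zero_of_sin
  rw [tan_UU]
  have := Real.sin_int_mul_pi (k + 1)
  push_cast at this
  exact this

-- uniqueness of the petal index
lemma J_unique {j k : ℤ} {θ : ℝ} (hj : θ ∈ J j) (hk : θ ∈ J k) : j = k := by
  obtain ⟨a1, a2⟩ := tan_half_mem hj
  obtain ⟨b1, b2⟩ := tan_half_mem hk
  have hp := pi_pos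
  have h1 : (j:ℝ) < (k:ℝ) + 1 := by nlinarith
  have h2 : (k:ℝ) < (j:ℝ) + 1 := by nlinarith
  have h1' : j < k + 1 := by exact_mod_cast (by push_cast; linarith : (j:ℝ) < ((k+1:ℤ):ℝ))
  have h2' : k < j + 1 := by exact_mod_cast (by push_cast; linarith : (k:ℝ) < ((j+1:ℤ):ℝ))
  omega

-- coverage
lemma exists_J {θ : ℝ} (h0 : 0 ≤ θ) (h2 : θ ≤ 2 * π) (hg : 0 < g θ) : ∃ k, θ ∈ J k := by
  have hp := pi_pos
  have hc : Real.cos θ ≠ -1 := by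
    intro hc; rw [g_of_eq θ hc] at hg; exact lt_irrefl 0 hg
  have hs : Real.sin (Real.tan (θ / 2)) ≠ 0 := by
    intro hs; rw [g_eq_zero_of_sin θ hs] at hg; exact lt_irrefl 0 hg
  have hθ0 : θ ≠ 0 := by
    intro he; apply hs; rw [he]; norm_num
  have hθ2 : θ ≠ 2 * π := by
    intro he; apply hs; rw [he]
    rw [show 2 * π / 2 = π by ring, Real.tan_pi]
    norm_num
  have hθpi : θ ≠ π := by
    intro he; apply hc; rw [he, Real.cos_pi]
  set t := Real.tan (θ / 2) with ht
  set k := ⌊t / π⌋ with hkdef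
  have hfl : (k:ℝ) ≤ t / π := Int.floor_le _
  have hfu : t / π < (k:ℝ) + 1 := Int.lt_floor_add_one _
  have hb1 : (k:ℝ) * π ≤ t := (le_div_iff₀ hp).1 hfl
  have hb2 : t < ((k:ℝ) + 1) * π := (div_lt_iff₀ hp).1 hfu
  have hne : t ≠ (k:ℝ) * π := by
    intro he; apply hs; rw [he]; exact Real.sin_int_mul_pi k
  have hb1' : (k:ℝ) * π < t := lt_of_le_of_ne hb1 (Ne.symm hne)
  refine ⟨k, ?_⟩
  rcases lt_or_gt_of_ne hθpi with hlt | hgt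
  · -- θ ∈ (0, π)
    have hθpos : 0 < θ := lt_of_le_of_ne h0 (Ne.symm hθ0)
    have htpos : 0 < t := Real.tan_pos_of_pos_of_lt_pi_div_two (by linarith) (by linarith)
    have hk0 : 0 ≤ k := by
      rw [hkdef]
      exact Int.le_floor.2 (by simpa using le_of_lt (div_pos htpos hp))
    have harc : arctan t = θ / 2 := Real.arctan_tan (by linarith) (by linarith)
    constructor
    · rw [LL, if_pos hk0]
      have := arctan_strictMono hb1'
      rw [harc] at this
      linarith
    · rw [UU, if_pos hk0]
      have := arctan_strictMono hb2
      rw [harc] at this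
      linarith
  · -- θ ∈ (π, 2π)
    have hθ2' : θ < 2 * π := lt_of_le_of_ne h2 hθ2
    have hx1 : -(π/2) < θ/2 - π := by linarith
    have hx2 : θ/2 - π < π/2 := by linarith
    have hx2' : θ/2 - π < 0 := by linarith
    have htx : t = Real.tan (θ/2 - π) := by rw [Real.tan_sub_pi]
    have htneg : t < 0 := by
      rw [htx]
      have := Real.strictMonoOn_tan (Set.mem_Ioo.2 ⟨hx1, hx2⟩)
        (Set.mem_Ioo.2 ⟨by linarith [pi_pos], by linarith [pi_pos]⟩) hx2'
      rwa [Real.tan_zero] at this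
    have hk0 : ¬ (0 ≤ k) := by
      rw [not_le, hkdef]
      have : t / π < 0 := div_neg_of_neg_of_pos htneg hp
      exact_mod_cast Int.floor_lt.2 (by simpa using this)
    have harc : arctan t = θ / 2 - π := by
      rw [htx]; exact Real.arctan_tan hx1 hx2
    constructor
    · rw [LL, if_neg hk0]
      have := arctan_strictMono hb1'
      rw [harc] at this
      linarith
    · rw [UU, if_neg hk0]
      have := arctan_strictMono hb2
      rw [harc] at this
      linarith

-- F and injectivity
noncomputable def F (θ : ℝ) : ℝ × ℝ := (g θ * Real.cos θ, g θ * Real.sin θ)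

lemma F_eq_zero_iff (θ : ℝ) : F θ = ((0:ℝ), (0:ℝ)) ↔ g θ = 0 := by
  constructor
  · intro h
    rw [F, Prod.mk.injEq] at h
    by_contra hg
    have h1 : Real.cos θ = 0 := by
      rcases mul_eq_zero.1 h.1 with h' | h'
      · exact absurd h' hg
      · exact h'
    have h2 : Real.sin θ = 0 := by
      rcases mul_eq_zero.1 h.2 with h' | h'
      · exact absurd h' hg
      · exact h'
    have := Real.sin_sq_add_cos_sq θ
    rw [h1, h2] at this
    norm_num at this
  · intro h
    rw [F, h]
    norm_num

lemma F_inj {θ θ' : ℝ} (h : θ ∈ Set.Ioo 0 (2*π)) (h' : θ' ∈ Set.Ioo 0 (2*π))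
    (hg : 0 < g θ) (hg' : 0 < g θ') (he : F θ = F θ') : θ = θ' := by
  rw [F, F, Prod.mk.injEq] at he
  obtain ⟨e1, e2⟩ := he
  have hsq : g θ ^ 2 = g θ' ^ 2 := by
    have a := Real.sin_sq_add_cos_sq θ
    have b := Real.sin_sq_add_cos_sq θ'
    have key : (g θ * Real.cos θ)^2 + (g θ * Real.sin θ)^2 = g θ ^ 2 := by
      linear_combination (g θ)^2 * a
    have key' : (g θ' * Real.cos θ')^2 + (g θ' * Real.sin θ')^2 = g θ' ^ 2 := by
      linear_combination (g θ')^2 * b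
    rw [← key, ← key', e1, e2]
  have hgg : g θ = g θ' := by nlinarith
  rw [hgg] at e1 e2
  have hc : Real.cos θ = Real.cos θ' := mul_left_cancel₀ (ne_of_gt hg') e1
  have hsn : Real.sin θ = Real.sin θ' := mul_left_cancel₀ (ne_of_gt hg') e2
  have hcos1 : Real.cos (θ - θ') = 1 := by
    rw [Real.cos_sub, hc, hsn]
    rw [← Real.sin_sq_add_cos_sq θ']
    ring
  have hb : θ - θ' = 0 := by
    rw [← Real.cos_eq_one_iff_of_lt_of_lt (by cases h; cases h'; linarith)
      (by cases h; cases h'; linarith)]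
    exact hcos1
  linarith

lemma continuous_F : Continuous F := by
  unfold F
  exact (continuous_g.mul Real.continuous_cos).prodMk (continuous_g.mul Real.continuous_sin)

lemma g_zero : g 0 = 0 := by
  apply g_eq_zero_of_sin; norm_num

lemma g_two_pi : g (2 * π) = 0 := by
  apply g_eq_zero_of_sin
  rw [show (2 * π) / 2 = π by ring, Real.tan_pi]
  norm_num

lemma F_zero : F 0 = ((0:ℝ), (0:ℝ)) := (F_eq_zero_iff 0).2 g_zero
lemma F_two_pi : F (2 * π) = ((0:ℝ), (0:ℝ)) := (F_eq_zero_iff _).2 g_two_pi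

lemma Ω_eq : Ω = F '' Set.Ico 0 (2 * π) := by
  ext p
  simp only [Ω, Set.mem_setOf_eq, Set.mem_image, F]
  constructor
  · rintro ⟨θ, hθ, rfl⟩; exact ⟨θ, hθ, rfl⟩
  · rintro ⟨θ, hθ, rfl⟩; exact ⟨θ, hθ, rfl⟩

lemma Ω_eq_Icc : Ω = F '' Set.Icc 0 (2 * π) := by
  rw [Ω_eq, ← Set.Ico_union_right (by positivity : (0:ℝ) ≤ 2 * π), Set.image_union,
    Set.image_singleton, F_two_pi]
  rw [Set.union_eq_self_of_subset_right]
  rw [Set.singleton_subset_iff]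
  exact ⟨0, ⟨le_refl 0, by positivity⟩, F_zero⟩

lemma isCompact_Ω : IsCompact Ω := by
  rw [Ω_eq_Icc]; exact (isCompact_Icc).image continuous_F

lemma isConnected_Ω : IsConnected Ω := by
  rw [Ω_eq_Icc]
  apply IsConnected.image
  · exact ⟨⟨0, Set.left_mem_Icc.2 (by positivity)⟩, isPreconnected_Icc⟩
  · exact continuous_F.continuousOn

lemma origin_mem_Ω : ((0,0) : ℝ × ℝ) ∈ Ω := by
  refine ⟨0, ⟨le_refl 0, by positivity⟩, ?_⟩
  rw [g_zero]; norm_num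

-- petals
noncomputable def P (k : ℤ) : Set (ℝ × ℝ) := F '' J k

lemma P_sub (k : ℤ) : P k ⊆ Ω \ {((0,0) : ℝ × ℝ)} := by
  rintro p ⟨θ, hθ, rfl⟩
  have hIoo := J_subset_Ioo hθ
  constructor
  · rw [Ω_eq]
    exact ⟨θ, ⟨le_of_lt hIoo.1, hIoo.2⟩, rfl⟩
  · simp only [Set.mem_singleton_iff]
    intro he
    have := (F_eq_zero_iff θ).1 he
    have := g_pos_of_mem hθ
    linarith

lemma mem_diff_elim {p : ℝ × ℝ} (hp : p ∈ Ω \ {((0,0) : ℝ × ℝ)}) :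
    ∃ k, ∃ θ ∈ J k, F θ = p := by
  obtain ⟨hΩ, hne⟩ := hp
  rw [Ω_eq] at hΩ
  obtain ⟨θ, hθ, rfl⟩ := hΩ
  have hgp : 0 < g θ := by
    rcases lt_or_eq_of_le (g_nonneg θ) with h | h
    · exact h
    · exfalso; apply hne; rw [Set.mem_singleton_iff, F_eq_zero_iff]; exact h.symm
  obtain ⟨k, hk⟩ := exists_J hθ.1 (le_of_lt hθ.2) hgp
  exact ⟨k, θ, hk, rfl⟩

lemma diff_eq_union : Ω \ {((0,0) : ℝ × ℝ)} = ⋃ k : ℤ, P k := by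
  ext p
  constructor
  · intro hp
    obtain ⟨k, θ, hθ, rfl⟩ := mem_diff_elim hp
    exact Set.mem_iUnion.2 ⟨k, θ, hθ, rfl⟩
  · intro hp
    obtain ⟨k, hk⟩ := Set.mem_iUnion.1 hp
    exact P_sub k hk

lemma LL_nonneg (k : ℤ) : 0 ≤ LL k := by
  have hp := pi_pos
  rw [LL]
  split
  · rename_i hk
    have : (0:ℝ) ≤ arctan ((k:ℝ) * π) := by
      rw [← Real.arctan_zero]
      apply Real.arctan_strictMono.monotone
      have : (0:ℝ) ≤ (k:ℝ) := by exact_mod_cast hk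
      positivity
    linarith
  · have := Real.neg_pi_div_two_lt_arctan ((k:ℝ) * π)
    linarith

lemma UU_le_two_pi (k : ℤ) : UU k ≤ 2 * π := by
  have hp := pi_pos
  rw [UU]
  split
  · have := Real.arctan_lt_pi_div_two (((k:ℝ) + 1) * π)
    linarith
  · rename_i hk
    have : arctan (((k:ℝ) + 1) * π) ≤ 0 := by
      rw [← Real.arctan_zero]
      apply Real.arctan_strictMono.monotone
      have : (k:ℝ) + 1 ≤ 0 := by
        have : (k:ℝ) ≤ -1 := by exact_mod_cast Int.le_sub_one_of_lt (not_le.1 hk)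
        linarith
      nlinarith
    linarith

lemma g_pos_of_F_ne {θ : ℝ} (h : F θ ≠ ((0,0) : ℝ × ℝ)) : 0 < g θ := by
  rcases lt_or_eq_of_le (g_nonneg θ) with h' | h'
  · exact h'
  · exact absurd ((F_eq_zero_iff θ).2 h'.symm) h

lemma theta_Ioo_of_pos {θ : ℝ} (h0 : 0 ≤ θ) (h2 : θ ≤ 2 * π) (hg : 0 < g θ) :
    θ ∈ Set.Ioo 0 (2 * π) := by
  constructor
  · rcases lt_or_eq_of_le h0 with h | h
    · exact h
    · exfalso; rw [← h, g_zero] at hg; exact lt_irrefl 0 hg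
  · rcases lt_or_eq_of_le h2 with h | h
    · exact h
    · exfalso; rw [h, g_two_pi] at hg; exact lt_irrefl 0 hg

noncomputable def KK (k : ℤ) : Set (ℝ × ℝ) :=
  F '' (Set.Icc 0 (LL k) ∪ Set.Icc (UU k) (2 * π))

lemma mem_P_iff_Icc {k : ℤ} {p : ℝ × ℝ} (hp : p ∈ Ω \ {((0,0) : ℝ × ℝ)}) :
    p ∈ P k ↔ p ∈ F '' Set.Icc (LL k) (UU k) := by
  constructor
  · rintro ⟨θ, hθ, rfl⟩
    exact ⟨θ, ⟨le_of_lt hθ.1, le_of_lt hθ.2⟩, rfl⟩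
  · rintro ⟨θ, hθ, rfl⟩
    have hgp : 0 < g θ := g_pos_of_F_ne (by simpa using hp.2)
    have h1 : θ ≠ LL k := by
      intro he; rw [he, g_LL] at hgp; exact lt_irrefl 0 hgp
    have h2 : θ ≠ UU k := by
      intro he; rw [he, g_UU] at hgp; exact lt_irrefl 0 hgp
    exact ⟨θ, ⟨lt_of_le_of_ne hθ.1 (Ne.symm h1), lt_of_le_of_ne hθ.2 h2⟩, rfl⟩

lemma mem_P_iff_not_K {k : ℤ} {p : ℝ × ℝ} (hp : p ∈ Ω \ {((0,0) : ℝ × ℝ)}) :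
    p ∈ P k ↔ p ∉ KK k := by
  have hp2 : p ≠ ((0,0) : ℝ × ℝ) := by simpa using hp.2
  constructor
  · rintro ⟨θ, hθ, rfl⟩ ⟨θ', hθ', he⟩
    have hgp : 0 < g θ := g_pos_of_mem hθ
    have hgp' : 0 < g θ' := g_pos_of_F_ne (by rw [he]; simpa using hp.2)
    have hb' : 0 ≤ θ' ∧ θ' ≤ 2 * π := by
      rcases hθ' with ⟨h1, h2⟩ | ⟨h1, h2⟩
      · exact ⟨h1, le_trans h2 (le_trans (le_of_lt (LL_lt_UU k)) (UU_le_two_pi k))⟩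
      · exact ⟨le_trans (LL_nonneg k) (le_trans (le_of_lt (LL_lt_UU k)) h1), h2⟩
    have hIoo' := theta_Ioo_of_pos hb'.1 hb'.2 hgp'
    have := F_inj (J_subset_Ioo hθ) hIoo' hgp hgp' he.symm
    rw [← this] at hθ'
    rcases hθ' with ⟨_, h2⟩ | ⟨h1, _⟩
    · exact absurd h2 (not_le.2 hθ.1)
    · exact absurd h1 (not_le.2 hθ.2)
  · intro hK
    obtain ⟨hΩ, _⟩ := hp
    rw [Ω_eq] at hΩ
    obtain ⟨θ, hθ, rfl⟩ := hΩ
    by_cases hJ : θ ∈ J k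
    · exact ⟨θ, hJ, rfl⟩
    · exfalso
      apply hK
      rw [J, Set.mem_Ioo, not_and_or] at hJ
      rcases hJ with h | h
      · exact ⟨θ, Or.inl ⟨hθ.1, not_lt.1 h⟩, rfl⟩
      · exact ⟨θ, Or.inr ⟨not_lt.1 h, le_of_lt hθ.2⟩, rfl⟩

-- subtype-level petals
noncomputable def Q (k : ℤ) : Set ↥(Ω \ {((0,0) : ℝ × ℝ)}) := Subtype.val ⁻¹' P k

lemma isClosed_Q (k : ℤ) : IsClosed (Q k) := by
  have heq : Q k = Subtype.val ⁻¹' (F '' Set.Icc (LL k) (UU k)) := by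
    ext x
    exact mem_P_iff_Icc x.2
  rw [heq]
  exact ((isCompact_Icc.image continuous_F).isClosed).preimage continuous_subtype_val

lemma isOpen_Q (k : ℤ) : IsOpen (Q k) := by
  have heq : Q k = Subtype.val ⁻¹' (KK k)ᶜ := by
    ext x
    exact mem_P_iff_not_K x.2
  rw [heq]
  apply IsOpen.preimage continuous_subtype_val
  exact (((isCompact_Icc.union isCompact_Icc).image continuous_F)).isClosed.isOpen_compl

lemma isPreconnected_Q (k : ℤ) : IsPreconnected (Q k) := by
  rw [← Topology.IsInducing.subtypeVal.isPreconnected_image]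
  have : Subtype.val '' Q k = P k := by
    rw [Q, Set.image_preimage_eq_inter_range, Subtype.range_coe]
    exact Set.inter_eq_self_of_subset_left (P_sub k)
  rw [this]
  exact (isPreconnected_Ioo).image F continuous_F.continuousOn

noncomputable def θm (k : ℤ) : ℝ := (LL k + UU k) / 2

lemma θm_mem (k : ℤ) : θm k ∈ J k := by
  have := LL_lt_UU k
  constructor <;> (rw [θm]; linarith)

noncomputable def xm (k : ℤ) : ↥(Ω \ {((0,0) : ℝ × ℝ)}) :=
  ⟨F (θm k), P_sub k ⟨θm k, θm_mem k, rfl⟩⟩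

lemma xm_mem_Q (k : ℤ) : xm k ∈ Q k := ⟨θm k, θm_mem k, rfl⟩

noncomputable def φ : ℤ → ConnectedComponents ↥(Ω \ {((0,0) : ℝ × ℝ)}) :=
  fun k => ConnectedComponents.mk (xm k)

lemma φ_surj : Function.Surjective φ := by
  intro c
  obtain ⟨y, rfl⟩ := ConnectedComponents.surjective_coe c
  obtain ⟨k, θ, hθ, hF⟩ := mem_diff_elim y.2
  have hyQ : y ∈ Q k := by
    show y.val ∈ P k
    rw [← hF]
    exact ⟨θ, hθ, rfl⟩
  refine ⟨k, ?_⟩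
  have hsub := (isPreconnected_Q k).subset_connectedComponent (xm_mem_Q k)
  exact (ConnectedComponents.coe_eq_coe'.2 (hsub hyQ)).symm

lemma φ_inj : Function.Injective φ := by
  intro j k hjk
  have hcc : connectedComponent (xm j) = connectedComponent (xm k) :=
    ConnectedComponents.coe_eq_coe.1 hjk
  have hsub : connectedComponent (xm k) ⊆ Q k :=
    (IsClopen.connectedComponent_subset ⟨isClosed_Q k, isOpen_Q k⟩ (xm_mem_Q k))
  have hxj : xm j ∈ Q k := hsub (hcc ▸ mem_connectedComponent)
  obtain ⟨θ', hθ', he⟩ := hxj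
  have : θ' = θm j :=
    F_inj (J_subset_Ioo hθ') (J_subset_Ioo (θm_mem j)) (g_pos_of_mem hθ')
      (g_pos_of_mem (θm_mem j)) he
  rw [this] at hθ'
  exact J_unique (θm_mem j) hθ'

lemma countable_cc : Countable (ConnectedComponents ↥(Ω \ {((0,0) : ℝ × ℝ)})) :=
  φ_surj.countable

lemma infinite_cc : Infinite (ConnectedComponents ↥(Ω \ {((0,0) : ℝ × ℝ)})) :=
  Infinite.of_injective φ φ_inj

theorem stmt_17 :
    IsCompact Ω ∧ IsConnected Ω ∧ ((0, 0) : ℝ × ℝ) ∈ Ω ∧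
    Countable (ConnectedComponents ↥(Ω \ {((0, 0) : ℝ × ℝ)})) ∧
    Infinite (ConnectedComponents ↥(Ω \ {((0, 0) : ℝ × ℝ)})) :=
  ⟨isCompact_Ω, isConnected_Ω, origin_mem_Ω, countable_cc, infinite_cc⟩
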